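/- arXiv:2009.00578 — 4 statements merged into one kernel-verified Lean document; each statement's English description precedes it below -/
import Mathlib

section
/- Suppose $\ell = d$ and $B_1, B_2, R_1, R_2$ are invertible. Let $P \in \mathcal{S}^d$ be invertible, with $\mathcal{L}_{12}(P) = \gamma B_1^\top P B_2$ invertible and $\frac{1}{\gamma}P^{-1} + B_1 R_1^{-1}B_1^\top - B_2 R_2^{-1}B_2^\top$ invertible. Then $\mathcal{M}(P) - \mathcal{L}(P)\mathcal{N}(P)^{-1}\mathcal{L}(P)^\top = Q - P + A^\top\big(\tfrac{1}{\gamma}P^{-1} + B_1 R_1^{-1}B_1^\top - B_2 R_2^{-1}B_2^\top\big)^{-1} A$. -/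
open Matrix

/-- Alternative compact form of the zero-sum discrete algebraic Riccati operator when
`ℓ = d` and `B₁, B₂, R₁, R₂, P, 𝓛₁₂(P)` are invertible. -/
theorem stmt_12 {d : ℕ} (γ : ℝ) (hγ : γ ∈ Set.Ioo (0:ℝ) 1)
    (A Q P B1 B2 R1 R2 : Matrix (Fin d) (Fin d) ℝ)
    (hP : P.IsSymm) (hQ : Q.IsSymm) (hR1 : R1.IsSymm) (hR2 : R2.IsSymm)
    (hB1 : IsUnit B1.det) (hB2 : IsUnit B2.det)
    (hR1u : IsUnit R1.det) (hR2u : IsUnit R2.det)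
    (hPu : IsUnit P.det)
    (hL12 : IsUnit (γ • (B1ᵀ * P * B2)).det)
    (hmid : IsUnit (γ⁻¹ • P⁻¹ + B1 * R1⁻¹ * B1ᵀ - B2 * R2⁻¹ * B2ᵀ).det) :
    (γ • (Aᵀ * P * A) - P + Q) -
        fromCols (γ • (Aᵀ * P * B1)) (γ • (Aᵀ * P * B2)) *
          (fromBlocks (γ • (B1ᵀ * P * B1) + R1) (γ • (B1ᵀ * P * B2))
            (γ • (B1ᵀ * P * B2))ᵀ (γ • (B2ᵀ * P * B2) - R2))⁻¹ *
          (fromCols (γ • (Aᵀ * P * B1)) (γ • (Aᵀ * P * B2)))ᵀ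
      = Q - P + Aᵀ * (γ⁻¹ • P⁻¹ + B1 * R1⁻¹ * B1ᵀ - B2 * R2⁻¹ * B2ᵀ)⁻¹ * A := by
  have hγ0 : γ ≠ 0 := ne_of_gt hγ.1
  set Bc := fromCols B1 B2 with hBc
  set Rb := fromBlocks R1 0 0 (-R2) with hRb
  set N := Rb + Bcᵀ * (γ • P) * Bc with hN
  have hγPu : IsUnit (γ • P).det := by
    rw [det_smul]; exact (IsUnit.pow _ (isUnit_iff_ne_zero.2 hγ0)).mul hPu
  have hinv : (γ • P)⁻¹ = γ⁻¹ • P⁻¹ := by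
    apply inv_eq_right_inv
    rw [smul_mul_smul_comm, Matrix.mul_nonsing_inv _ hPu, mul_inv_cancel₀ hγ0, one_smul]
  have hγPiu : IsUnit ((γ • P)⁻¹).det := isUnit_nonsing_inv_det _ hγPu
  have hγPii : ((γ • P)⁻¹)⁻¹ = γ • P := Matrix.nonsing_inv_nonsing_inv _ hγPu
  have hRbu : IsUnit Rb.det := by
    rw [hRb, det_fromBlocks_zero₁₂, det_neg]
    exact hR1u.mul ((IsUnit.pow _ isUnit_one.neg).mul hR2u)
  have hRbii : (Rb⁻¹)⁻¹ = Rb := Matrix.nonsing_inv_nonsing_inv _ hRbu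
  have hRbinv : Rb⁻¹ = fromBlocks R1⁻¹ 0 0 (-(R2⁻¹)) := by
    apply inv_eq_right_inv
    rw [hRb, fromBlocks_multiply]
    simp [Matrix.mul_nonsing_inv _ hR1u, Matrix.mul_nonsing_inv _ hR2u, fromBlocks_one]
  have hBRB : Bc * Rb⁻¹ * Bcᵀ = B1 * R1⁻¹ * B1ᵀ - B2 * R2⁻¹ * B2ᵀ := by
    rw [hRbinv, hBc, transpose_fromCols, fromCols_mul_fromBlocks,
      fromCols_mul_fromRows]
    simp [Matrix.mul_assoc, sub_eq_add_neg]
  have hM : γ⁻¹ • P⁻¹ + B1 * R1⁻¹ * B1ᵀ - B2 * R2⁻¹ * B2ᵀ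
      = (γ • P)⁻¹ + Bc * Rb⁻¹ * Bcᵀ := by
    rw [hinv, hBRB]; abel
  -- determinant of N is a unit
  have hNu : IsUnit N.det := by
    haveI : Invertible ((γ • P)⁻¹) := ((γ • P)⁻¹).invertibleOfIsUnitDet hγPiu
    haveI : Invertible Rb := Rb.invertibleOfIsUnitDet hRbu
    have h1 := det_fromBlocks₁₁ ((γ • P)⁻¹) Bc (-Bcᵀ) Rb
    have h2 := det_fromBlocks₂₂ ((γ • P)⁻¹) Bc (-Bcᵀ) Rb
    rw [invOf_eq_nonsing_inv, hγPii] at h1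
    rw [invOf_eq_nonsing_inv] at h2
    have e1 : Rb - -Bcᵀ * (γ • P) * Bc = N := by rw [hN]; simp [sub_eq_add_neg]
    have e2 : (γ • P)⁻¹ - Bc * Rb⁻¹ * -Bcᵀ
        = γ⁻¹ • P⁻¹ + B1 * R1⁻¹ * B1ᵀ - B2 * R2⁻¹ * B2ᵀ := by
      rw [hM]; simp [Matrix.mul_neg, sub_eq_add_neg]
    rw [e1] at h1
    rw [e2] at h2
    have : ((γ • P)⁻¹).det * N.det = Rb.det *
        (γ⁻¹ • P⁻¹ + B1 * R1⁻¹ * B1ᵀ - B2 * R2⁻¹ * B2ᵀ).det := by rw [← h1, ← h2]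
    have hu : IsUnit (((γ • P)⁻¹).det * N.det) := this ▸ hRbu.mul hmid
    exact isUnit_of_mul_isUnit_right hu
  -- Woodbury
  have hNuM : IsUnit N := (isUnit_iff_isUnit_det _).2 hNu
  have key : (γ⁻¹ • P⁻¹ + B1 * R1⁻¹ * B1ᵀ - B2 * R2⁻¹ * B2ᵀ)⁻¹
      = γ • P - (γ • P) * Bc * N⁻¹ * Bcᵀ * (γ • P) := by
    rw [hM, add_mul_mul_inv_eq_sub _ _ _ _
      ((isUnit_iff_isUnit_det _).2 hγPiu)
      ((isUnit_iff_isUnit_det _).2 (isUnit_nonsing_inv_det _ hRbu))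
      (by rwa [hRbii, hγPii, ← hN]), hRbii, hγPii, ← hN]
  -- block identities
  have hL : fromCols (γ • (Aᵀ * P * B1)) (γ • (Aᵀ * P * B2)) = Aᵀ * (γ • P) * Bc := by
    rw [hBc, Matrix.mul_assoc, mul_fromCols]
    congr 1 <;> simp [Matrix.mul_smul, Matrix.smul_mul, Matrix.mul_assoc]
  have hNblocks : fromBlocks (γ • (B1ᵀ * P * B1) + R1) (γ • (B1ᵀ * P * B2))
      (γ • (B1ᵀ * P * B2))ᵀ (γ • (B2ᵀ * P * B2) - R2) = N := by
    rw [hN, add_comm Rb, hBc, hRb, transpose_fromCols, fromRows_mul,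
      fromRows_mul_fromCols, fromBlocks_add]
    simp only [transpose_smul, transpose_mul, transpose_transpose, hP.eq,
      Matrix.smul_mul, Matrix.mul_smul, add_zero, Matrix.mul_assoc, sub_eq_add_neg]
  have hLT : (Aᵀ * (γ • P) * Bc)ᵀ = Bcᵀ * (γ • P) * A := by
    rw [transpose_mul, transpose_mul, transpose_transpose, transpose_smul, hP.eq,
      Matrix.mul_assoc]
  rw [hL, hNblocks, hLT, key]
  have hAPA : γ • (Aᵀ * P * A) = Aᵀ * (γ • P) * A := by
    simp only [Matrix.mul_smul, Matrix.smul_mul]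
  rw [hAPA]
  generalize (γ • P) = G
  noncomm_ring
  simp only [Matrix.mul_assoc]
end

section
/- Suppose $\ell = d$ and $B_1, B_2, R_1, R_2$ invertible. Let $P^o$ solve $P^o = \gamma(A^\top P^o + 2Q)(A + (B_1\Gamma_1 + B_2\Gamma_2)P^o)$ with $\Gamma_1 = -\tfrac12 R_1^{-1}B_1^\top$, $\Gamma_2 = \tfrac12 R_2^{-1}B_2^\top$, and assume $A^\top P^o = (P^o)^\top A$. Set $P^c = \tfrac12 A^\top P^o + Q$. If $P^c$ and $(P^c)^{-1} + \gamma(B_1 R_1^{-1}B_1^\top - B_2 R_2^{-1}B_2^\top)$ are invertible, then $P^c$ satisfies $0 = Q - P^c + A^\top\big(\tfrac{1}{\gamma}(P^c)^{-1} + B_1 R_1^{-1}B_1^\top - B_2 R_2^{-1}B_2^\top\big)^{-1}A$. -/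
open Matrix

/-- From a solution `P^o` of the open-loop Riccati equation, the matrix
`P^c = ½ Aᵀ P^o + Q` solves the (alternative form of the) closed-loop Riccati equation. -/
theorem stmt_13 {d : ℕ} (γ : ℝ) (hγ : γ ∈ Set.Ioo (0:ℝ) 1)
    (A Q B1 B2 R1 R2 : Matrix (Fin d) (Fin d) ℝ)
    (hQ : Q.IsSymm) (hR1 : R1.IsSymm) (hR2 : R2.IsSymm)
    (hB1 : IsUnit B1.det) (hB2 : IsUnit B2.det)
    (hR1u : IsUnit R1.det) (hR2u : IsUnit R2.det)
    (Po : Matrix (Fin d) (Fin d) ℝ)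
    (hPo : Po = γ • ((Aᵀ * Po + (2:ℝ) • Q) *
      (A + (B1 * (-((1:ℝ)/2) • (R1⁻¹ * B1ᵀ)) + B2 * (((1:ℝ)/2) • (R2⁻¹ * B2ᵀ))) * Po)))
    (hsym : Aᵀ * Po = Poᵀ * A)
    (Pc : Matrix (Fin d) (Fin d) ℝ)
    (hPc : Pc = ((1:ℝ)/2) • (Aᵀ * Po) + Q)
    (hPcu : IsUnit Pc.det)
    (hmid : IsUnit (Pc⁻¹ + γ • (B1 * R1⁻¹ * B1ᵀ - B2 * R2⁻¹ * B2ᵀ)).det) :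
    0 = Q - Pc + Aᵀ * (γ⁻¹ • Pc⁻¹ + B1 * R1⁻¹ * B1ᵀ - B2 * R2⁻¹ * B2ᵀ)⁻¹ * A := by
  obtain ⟨hγ0, hγ1⟩ := hγ
  have hγne : γ ≠ 0 := ne_of_gt hγ0
  set S : Matrix (Fin d) (Fin d) ℝ := B1 * R1⁻¹ * B1ᵀ - B2 * R2⁻¹ * B2ᵀ with hSdef
  set M : Matrix (Fin d) (Fin d) ℝ := γ⁻¹ • Pc⁻¹ + S with hMdef
  -- rewrite open-loop equation
  have h2Pc : Aᵀ * Po + (2:ℝ) • Q = (2:ℝ) • Pc := by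
    rw [hPc]; module
  have hPo' : Po = (2*γ) • (Pc * A) - γ • (Pc * (S * Po)) := by
    have h := hPo
    rw [h2Pc] at h
    refine h.trans ?_
    simp only [hSdef, Matrix.mul_smul, Matrix.smul_mul, Matrix.add_mul, Matrix.sub_mul,
      Matrix.mul_add, Matrix.mul_sub, mul_assoc]
    module
  have hPcinv : Pc⁻¹ * Po = (2*γ) • A - γ • (S * Po) := by
    calc Pc⁻¹ * Po = Pc⁻¹ * ((2*γ) • (Pc * A) - γ • (Pc * (S * Po))) := by rw [← hPo']
    _ = (2*γ) • ((Pc⁻¹ * Pc) * A) - γ • ((Pc⁻¹ * Pc) * (S * Po)) := by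
        simp only [Matrix.mul_sub, Matrix.mul_smul, mul_assoc]
    _ = (2*γ) • A - γ • (S * Po) := by
        rw [Matrix.nonsing_inv_mul _ hPcu]; simp
  have hMPo : M * Po = (2:ℝ) • A := by
    rw [hMdef, Matrix.add_mul, Matrix.smul_mul, hPcinv, smul_sub, smul_smul, smul_smul]
    have e1 : γ⁻¹ * (2 * γ) = 2 := by field_simp
    rw [e1, inv_mul_cancel₀ hγne, one_smul]
    abel
  have hM2 : M = γ⁻¹ • (Pc⁻¹ + γ • S) := by
    rw [smul_add, smul_smul, inv_mul_cancel₀ hγne, one_smul]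
  have hMu : IsUnit M.det := by
    rw [hM2, Matrix.det_smul]
    exact (isUnit_iff_ne_zero.2 (pow_ne_zero _ (inv_ne_zero hγne))).mul hmid
  have hPoM : Po = (2:ℝ) • (M⁻¹ * A) := by
    have := congrArg (fun X => M⁻¹ * X) hMPo
    simpa [← mul_assoc, Matrix.nonsing_inv_mul _ hMu, Matrix.mul_smul] using this
  have hgoalM : (γ⁻¹ • Pc⁻¹ + B1 * R1⁻¹ * B1ᵀ - B2 * R2⁻¹ * B2ᵀ) = M := by
    rw [hMdef, hSdef]; abel
  rw [hgoalM, hPc]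
  have : Aᵀ * M⁻¹ * A = ((1:ℝ)/2) • (Aᵀ * Po) := by
    rw [hPoM]; simp only [Matrix.mul_smul, Matrix.smul_mul, smul_smul, mul_assoc]
    norm_num
  rw [this]
  abel
end

section
/- Suppose additionally that $A$ is invertible, and let $P^o = 2A^{-\top}(P^c - Q)$ where $P^c$ solves $0 = Q - P^c + A^\top(\tfrac{1}{\gamma}(P^c)^{-1} + B_1R_1^{-1}B_1^\top - B_2R_2^{-1}B_2^\top)^{-1}A$ with $P^c$ invertible. Then with $\check B = [B_1, B_2]$ and $\check R = \mathrm{diag}(R_1, -R_2)$, the closed-loop feedback gains satisfy $-B_1 K_1^* + B_2 K_2^* = -\tfrac12 \check B \check R^{-1}\check B^\top P^o = B_1\Gamma_1 P^o + B_2\Gamma_2 P^o$, where $K_1^*, K_2^*$ are defined by $\begin{pmatrix}-K_1^*\\ K_2^*\end{pmatrix} = -(\gamma\check B^\top P^c\check B + \check R)^{-1}\gamma\check B^\top P^c A$, $\Gamma_1 = -\tfrac12 R_1^{-1}B_1^\top$, $\Gamma_2 = \tfrac12 R_2^{-1}B_2^\top$. -/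
open Matrix

/-- The closed-loop combined drift correction `-B₁K₁* + B₂K₂*` coincides with the open-loop
one `(B₁Γ₁ + B₂Γ₂)P^o`, where `P^o = 2A⁻ᵀ(P^c - Q)`. -/
theorem stmt_14 {d : ℕ} (γ : ℝ) (hγ : γ ∈ Set.Ioo (0:ℝ) 1)
    (A Q B1 B2 R1 R2 : Matrix (Fin d) (Fin d) ℝ)
    (hQ : Q.IsSymm) (hR1 : R1.IsSymm) (hR2 : R2.IsSymm)
    (hA : IsUnit A.det) (hB1 : IsUnit B1.det) (hB2 : IsUnit B2.det)
    (hR1u : IsUnit R1.det) (hR2u : IsUnit R2.det)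
    (Pc : Matrix (Fin d) (Fin d) ℝ) (hPcsymm : Pc.IsSymm) (hPcu : IsUnit Pc.det)
    (hPc : 0 = Q - Pc + Aᵀ * (γ⁻¹ • Pc⁻¹ + B1 * R1⁻¹ * B1ᵀ - B2 * R2⁻¹ * B2ᵀ)⁻¹ * A)
    (Po : Matrix (Fin d) (Fin d) ℝ)
    (hPo : Po = (2:ℝ) • ((Aᵀ)⁻¹ * (Pc - Q)))
    (hNu : IsUnit
      (γ • ((fromCols B1 B2)ᵀ * Pc * fromCols B1 B2) + fromBlocks R1 0 0 (-R2)).det)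
    (K1s K2s : Matrix (Fin d) (Fin d) ℝ)
    (hKs : fromRows (-K1s) K2s =
      -((γ • ((fromCols B1 B2)ᵀ * Pc * fromCols B1 B2) + fromBlocks R1 0 0 (-R2))⁻¹ *
        (γ • ((fromCols B1 B2)ᵀ * Pc * A)))) :
    -(B1 * K1s) + B2 * K2s =
      -((1:ℝ)/2) • (fromCols B1 B2 * (fromBlocks R1 0 0 (-R2))⁻¹ *
        (fromCols B1 B2)ᵀ * Po) ∧
    -(B1 * K1s) + B2 * K2s =
      B1 * (-((1:ℝ)/2) • (R1⁻¹ * B1ᵀ)) * Po + B2 * (((1:ℝ)/2) • (R2⁻¹ * B2ᵀ)) * Po := by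
  obtain ⟨hγ0, hγ1⟩ := hγ
  have hγne : γ ≠ 0 := ne_of_gt hγ0
  set Bc := fromCols B1 B2 with hBc
  set Rc := fromBlocks R1 0 0 (-R2) with hRc
  set N := γ • (Bcᵀ * Pc * Bc) + Rc with hN
  set M := γ⁻¹ • Pc⁻¹ + B1 * R1⁻¹ * B1ᵀ - B2 * R2⁻¹ * B2ᵀ with hM
  have hRcinv : Rc⁻¹ = fromBlocks R1⁻¹ 0 0 (-(R2⁻¹)) := by
    apply inv_eq_right_inv
    rw [hRc, fromBlocks_multiply]
    simp only [Matrix.mul_zero, Matrix.zero_mul, add_zero, zero_add, Matrix.neg_mul,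
      Matrix.mul_neg, neg_neg, Matrix.mul_nonsing_inv _ hR1u, Matrix.mul_nonsing_inv _ hR2u,
      neg_zero, fromBlocks_one]
  have hRcu : IsUnit Rc.det := by
    rw [hRc, det_fromBlocks_zero₂₁, det_neg]
    exact hR1u.mul ((isUnit_one.neg.pow _).mul hR2u)
  have hBRB : Bc * Rc⁻¹ * Bcᵀ = B1 * R1⁻¹ * B1ᵀ - B2 * R2⁻¹ * B2ᵀ := by
    rw [hRcinv, hBc, transpose_fromCols, fromCols_mul_fromBlocks,
      fromCols_mul_fromRows]
    simp [Matrix.mul_neg, Matrix.neg_mul, sub_eq_add_neg, Matrix.mul_assoc]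
  have hM' : M = γ⁻¹ • Pc⁻¹ + Bc * Rc⁻¹ * Bcᵀ := by
    rw [hM, add_sub_assoc, ← hBRB]
  have hPcM : Pc * M = γ⁻¹ • ((1 : Matrix (Fin d) (Fin d) ℝ)
      + (γ • (Pc * Bc)) * (Rc⁻¹ * Bcᵀ)) := by
    rw [hM']
    rw [Matrix.mul_add, Matrix.mul_smul, Matrix.mul_nonsing_inv _ hPcu, smul_add]
    congr 1
    simp [Matrix.smul_mul, smul_smul, inv_mul_cancel₀ hγne, Matrix.mul_assoc]
  have hNinvN : N⁻¹ * N = 1 := Matrix.nonsing_inv_mul _ hNu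
  have hMu : IsUnit M.det := by
    have hdet : Pc.det * M.det = (γ⁻¹)^d * (Rc⁻¹.det * N.det) := by
      calc Pc.det * M.det = (Pc * M).det := (det_mul _ _).symm
        _ = (γ⁻¹ • ((1 : Matrix (Fin d) (Fin d) ℝ)
              + (γ • (Pc * Bc)) * (Rc⁻¹ * Bcᵀ))).det := by rw [hPcM]
        _ = (γ⁻¹)^d * ((1 : Matrix (Fin d) (Fin d) ℝ)
              + (γ • (Pc * Bc)) * (Rc⁻¹ * Bcᵀ)).det := by rw [det_smul, Fintype.card_fin]
        _ = (γ⁻¹)^d * ((1 : Matrix (Fin d ⊕ Fin d) (Fin d ⊕ Fin d) ℝ)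
              + (Rc⁻¹ * Bcᵀ) * (γ • (Pc * Bc))).det := by
              rw [det_one_add_mul_comm]
        _ = (γ⁻¹)^d * (Rc⁻¹ * N).det := by
              congr 2
              rw [hN, Matrix.mul_add, Matrix.nonsing_inv_mul _ hRcu, add_comm]
              congr 1
              simp [Matrix.mul_smul, Matrix.smul_mul, Matrix.mul_assoc]
        _ = (γ⁻¹)^d * (Rc⁻¹.det * N.det) := by rw [det_mul]
    have hU : IsUnit (Pc.det * M.det) := by
      rw [hdet]
      exact ((isUnit_iff_ne_zero.2 (inv_ne_zero hγne)).pow d).mul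
        ((isUnit_nonsing_inv_det _ hRcu).mul hNu)
    exact (IsUnit.mul_iff.mp hU).2
  have hPcQ : Pc - Q = Aᵀ * M⁻¹ * A := by
    have h := hPc.symm
    rw [add_eq_zero_iff_neg_eq, neg_sub] at h
    exact h
  have hPoM : Po = (2:ℝ) • (M⁻¹ * A) := by
    rw [hPo, hPcQ, ← Matrix.mul_assoc, ← Matrix.mul_assoc,
      Matrix.nonsing_inv_mul _ (by rwa [det_transpose] : IsUnit Aᵀ.det), Matrix.one_mul]
  have hkey : γ • (Bc * N⁻¹ * Bcᵀ * Pc) * M = Bc * Rc⁻¹ * Bcᵀ := by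
    have h2 : Bcᵀ * (Pc * M) = γ⁻¹ • (N * (Rc⁻¹ * Bcᵀ)) := by
      rw [hPcM, hN, Matrix.mul_smul]
      congr 1
      rw [Matrix.mul_add, Matrix.mul_one, Matrix.add_mul,
        ← Matrix.mul_assoc Rc, Matrix.mul_nonsing_inv _ hRcu, Matrix.one_mul, add_comm]
      congr 1
      simp [Matrix.mul_smul, Matrix.smul_mul, Matrix.mul_assoc]
    calc γ • (Bc * N⁻¹ * Bcᵀ * Pc) * M = Bc * (N⁻¹ * (γ • (Bcᵀ * (Pc * M)))) := by
          simp [Matrix.smul_mul, Matrix.mul_smul, Matrix.mul_assoc]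
      _ = Bc * (N⁻¹ * (γ • (γ⁻¹ • (N * (Rc⁻¹ * Bcᵀ))))) := by rw [h2]
      _ = Bc * ((N⁻¹ * N) * (Rc⁻¹ * Bcᵀ)) := by
          rw [smul_smul, mul_inv_cancel₀ hγne, one_smul, Matrix.mul_assoc]
      _ = Bc * Rc⁻¹ * Bcᵀ := by rw [hNinvN, Matrix.one_mul, Matrix.mul_assoc]
  have hkey2 : γ • (Bc * N⁻¹ * Bcᵀ * Pc) = Bc * Rc⁻¹ * Bcᵀ * M⁻¹ := by
    calc γ • (Bc * N⁻¹ * Bcᵀ * Pc) = γ • (Bc * N⁻¹ * Bcᵀ * Pc) * M * M⁻¹ := by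
          rw [Matrix.mul_assoc (γ • (Bc * N⁻¹ * Bcᵀ * Pc)) M M⁻¹,
            Matrix.mul_nonsing_inv _ hMu, Matrix.mul_one]
      _ = Bc * Rc⁻¹ * Bcᵀ * M⁻¹ := by rw [hkey]
  have hLHS : -(B1 * K1s) + B2 * K2s = -(γ • (Bc * N⁻¹ * Bcᵀ * Pc) * A) := by
    have h := congrArg (fun X => Bc * X) hKs
    simp only [hBc, fromCols_mul_fromRows, Matrix.mul_neg] at h
    rw [← hBc] at h
    rw [h]
    congr 1
    simp [Matrix.mul_smul, Matrix.smul_mul, Matrix.mul_assoc]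
  have hrhs1 : -(B1 * K1s) + B2 * K2s = -((1:ℝ)/2) • (Bc * Rc⁻¹ * Bcᵀ * Po) := by
    rw [hLHS, hkey2, hPoM]
    simp only [Matrix.mul_smul, smul_smul, Matrix.mul_assoc]
    norm_num
  refine ⟨hrhs1, ?_⟩
  rw [hrhs1]
  have : B1 * (-((1:ℝ)/2) • (R1⁻¹ * B1ᵀ)) * Po + B2 * (((1:ℝ)/2) • (R2⁻¹ * B2ᵀ)) * Po
      = -((1:ℝ)/2) • (Bc * Rc⁻¹ * Bcᵀ * Po) := by
    rw [hBRB]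
    simp only [Matrix.mul_smul, Matrix.smul_mul, Matrix.sub_mul, smul_sub, neg_smul,
      Matrix.mul_assoc]
    simp only [Matrix.neg_mul, Matrix.mul_neg, Matrix.mul_smul, Matrix.smul_mul,
      Matrix.mul_assoc, sub_neg_eq_add, neg_smul]
  exact this.symm
end

section
/- Let $(y_t)$ follow $y_{t+1} = (A - B_1K_1 + B_2K_2)y_t + \epsilon^1_{t+1}$, $y_0 = \tilde y$, with $\mathbb{E}[\sum_t \gamma^t\|y_t\|^2]<\infty$, noise i.i.d. mean zero. Define $C_y(K_1,K_2,\tilde y) = \mathbb{E}[\sum_{t\ge 0}\gamma^t(y_t^\top Q y_t + u_{1,t}^\top R_1 u_{1,t} - u_{2,t}^\top R_2 u_{2,t})]$ with $u_{1,t}=-K_1 y_t$, $u_{2,t}=K_2 y_t$, and $C_y^*(P;\tilde y) = \tilde y^\top P\tilde y + \tfrac{\gamma}{1-\gamma}\mathbb{E}[(\epsilon^1_1)^\top P\epsilon^1_1]$. Then for every $P \in \mathcal{S}^d$: $C_y(K_1,K_2,\tilde y) - C_y^*(P;\tilde y) = \mathbb{E}\big[\sum_{t\ge 0}\gamma^t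 (y_t,u_{1,t},u_{2,t})^\top \begin{pmatrix}\mathcal{M}(P) & \mathcal{L}_1(P) & \mathcal{L}_2(P)\\ \mathcal{L}_1(P)^\top & \mathcal{N}_1(P) & \mathcal{L}_{12}(P)\\ \mathcal{L}_2(P)^\top & \mathcal{L}_{12}(P)^\top & \mathcal{N}_2(P)\end{pmatrix}(y_t,u_{1,t},u_{2,t})\big]$. -/
open Matrix MeasureTheory ProbabilityTheory
open scoped ENNReal NNReal

section helpers

lemma dot_trans {m n : Type*} [Fintype m] [Fintype n] (M : Matrix n m ℝ) (x : m → ℝ) (z : n → ℝ) :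
    x ⬝ᵥ Mᵀ *ᵥ z = (M *ᵥ x) ⬝ᵥ z := by
  rw [Matrix.dotProduct_mulVec, Matrix.vecMul_transpose]

lemma quad_expand {d l : ℕ} (γ : ℝ) (A Q P : Matrix (Fin d) (Fin d) ℝ) (hP : Pᵀ = P)
    (B1 B2 : Matrix (Fin d) (Fin l) ℝ) (R1 R2 : Matrix (Fin l) (Fin l) ℝ)
    (y : Fin d → ℝ) (u1 u2 : Fin l → ℝ) :
    (Sum.elim y (Sum.elim u1 u2)) ⬝ᵥ
      (fromBlocks (γ • (Aᵀ * P * A) - P + Q)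
        (fromCols (γ • (Aᵀ * P * B1)) (γ • (Aᵀ * P * B2)))
        (fromRows (γ • (Aᵀ * P * B1))ᵀ (γ • (Aᵀ * P * B2))ᵀ)
        (fromBlocks (γ • (B1ᵀ * P * B1) + R1) (γ • (B1ᵀ * P * B2))
          (γ • (B1ᵀ * P * B2))ᵀ (γ • (B2ᵀ * P * B2) - R2))).mulVec
      (Sum.elim y (Sum.elim u1 u2))
    = γ * ((A *ᵥ y + B1 *ᵥ u1 + B2 *ᵥ u2) ⬝ᵥ P *ᵥ (A *ᵥ y + B1 *ᵥ u1 + B2 *ᵥ u2))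
      - y ⬝ᵥ P *ᵥ y + (y ⬝ᵥ Q *ᵥ y + u1 ⬝ᵥ R1 *ᵥ u1 - u2 ⬝ᵥ R2 *ᵥ u2) := by
  simp only [fromBlocks_mulVec, fromCols_mulVec_sumElim, fromRows_mulVec,
    sumElim_dotProduct_sumElim, Sum.elim_comp_inl, Sum.elim_comp_inr, transpose_smul,
    transpose_mul, transpose_transpose, hP,
    Matrix.add_mulVec, Matrix.sub_mulVec, smul_mulVec, ← Matrix.mulVec_mulVec,
    dotProduct_add, add_dotProduct, dotProduct_sub, dotProduct_smul, smul_eq_mul, mulVec_add,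
    dot_trans]
  ring

lemma measurable_mulVec' {m n : ℕ} (M : Matrix (Fin m) (Fin n) ℝ) :
    Measurable (fun v : Fin n → ℝ => M *ᵥ v) :=
  (Matrix.mulVecLin M).continuous_of_finiteDimensional.measurable

lemma continuous_quadform {m : ℕ} (M : Matrix (Fin m) (Fin m) ℝ) :
    Continuous (fun v : Fin m → ℝ => v ⬝ᵥ M *ᵥ v) := by
  simp only [dotProduct, mulVec]
  fun_prop

lemma mulVec_norm_bound {m n : ℕ} (M : Matrix (Fin m) (Fin n) ℝ) (x : Fin n → ℝ) :
    ‖M *ᵥ x‖ ≤ (∑ i, ∑ j, |M i j|) * ‖x‖ := by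
  rw [pi_norm_le_iff_of_nonneg (by positivity)]
  intro i
  calc ‖(M *ᵥ x) i‖ = |∑ j, M i j * x j| := by simp [mulVec, dotProduct]
    _ ≤ ∑ j, |M i j * x j| := Finset.abs_sum_le_sum_abs _ _
    _ ≤ ∑ j, |M i j| * ‖x‖ := by
        refine Finset.sum_le_sum fun j _ => ?_
        rw [abs_mul]
        exact mul_le_mul_of_nonneg_left (norm_le_pi_norm x j) (abs_nonneg _)
    _ ≤ ∑ i, ∑ j, |M i j| * ‖x‖ :=
        Finset.single_le_sum (f := fun i => ∑ j, |M i j| * ‖x‖)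
          (fun i _ => Finset.sum_nonneg fun j _ => by positivity) (Finset.mem_univ i)
    _ = (∑ i, ∑ j, |M i j|) * ‖x‖ := by simp [Finset.sum_mul]

lemma quad_bound {m n : ℕ} (M : Matrix (Fin m) (Fin n) ℝ) (x : Fin m → ℝ) (z : Fin n → ℝ) :
    |x ⬝ᵥ M *ᵥ z| ≤ (∑ i, ∑ j, |M i j|) * (‖x‖ * ‖z‖) := by
  calc |x ⬝ᵥ M *ᵥ z| = |∑ i, ∑ j, x i * (M i j * z j)| := by
        simp [dotProduct, mulVec, Finset.mul_sum]
    _ ≤ ∑ i, ∑ j, |x i * (M i j * z j)| := by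
        refine (Finset.abs_sum_le_sum_abs _ _).trans ?_
        exact Finset.sum_le_sum fun i _ => Finset.abs_sum_le_sum_abs _ _
    _ ≤ ∑ i, ∑ j, |M i j| * (‖x‖ * ‖z‖) := by
        refine Finset.sum_le_sum fun i _ => Finset.sum_le_sum fun j _ => ?_
        rw [abs_mul, abs_mul]
        calc |x i| * (|M i j| * |z j|) = |M i j| * (|x i| * |z j|) := by ring
          _ ≤ |M i j| * (‖x‖ * ‖z‖) := by
              refine mul_le_mul_of_nonneg_left ?_ (abs_nonneg _)
              exact mul_le_mul (norm_le_pi_norm x i) (norm_le_pi_norm z j) (abs_nonneg _)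
                (norm_nonneg _)
    _ = (∑ i, ∑ j, |M i j|) * (‖x‖ * ‖z‖) := by
        simp [Finset.sum_mul]

variable {m n : ℕ} {Ω : Type*} [MeasurableSpace Ω] {μ : Measure Ω}

lemma memℒp_component {f : Ω → Fin n → ℝ} (hf : MemLp f 2 μ) (i : Fin n) :
    MemLp (fun ω => f ω i) 2 μ :=
  hf.of_le ((continuous_apply i).comp_aestronglyMeasurable hf.1)
    (Filter.Eventually.of_forall fun ω => norm_le_pi_norm (f ω) i)

lemma memℒp_mulVec {f : Ω → Fin n → ℝ} (hf : MemLp f 2 μ) (M : Matrix (Fin m) (Fin n) ℝ) :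
    MemLp (fun ω => M *ᵥ f ω) 2 μ :=
  hf.of_le_mul ((measurable_mulVec' M).comp_aemeasurable hf.1.aemeasurable).aestronglyMeasurable
    (Filter.Eventually.of_forall fun ω => mulVec_norm_bound M (f ω))

lemma L2_mul_integrable {f g : Ω → ℝ} (hf : MemLp f 2 μ) (hg : MemLp g 2 μ) :
    Integrable (fun ω => f ω * g ω) μ := by
  have h : (1 : ℝ≥0∞) / 1 = 1 / 2 + 1 / 2 := by
    rw [ENNReal.div_add_div_same, one_div_one, show ((1:ℝ≥0∞)+1) = 2 from one_add_one_eq_two,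
      ENNReal.div_self (by norm_num) (by norm_num)]
  have := hg.smul (p := 2) (r := 1) hf
  rw [memLp_one_iff_integrable] at this
  exact this

lemma quad_eq_sum (M : Matrix (Fin m) (Fin n) ℝ) (x : Fin m → ℝ) (z : Fin n → ℝ) :
    x ⬝ᵥ M *ᵥ z = ∑ i, ∑ j, M i j * (x i * z j) := by
  simp only [dotProduct, mulVec, Finset.mul_sum]
  exact Finset.sum_congr rfl fun i _ => Finset.sum_congr rfl fun j _ => by ring

lemma integrable_quadform {f : Ω → Fin m → ℝ} {g : Ω → Fin n → ℝ}
    (hf : MemLp f 2 μ) (hg : MemLp g 2 μ) (M : Matrix (Fin m) (Fin n) ℝ) :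
    Integrable (fun ω => f ω ⬝ᵥ M *ᵥ g ω) μ := by
  simp only [quad_eq_sum]
  refine integrable_finset_sum _ fun i _ => integrable_finset_sum _ fun j _ => ?_
  exact (L2_mul_integrable (memℒp_component hf i) (memℒp_component hg j)).const_mul _

lemma integral_quadform {f : Ω → Fin m → ℝ} {g : Ω → Fin n → ℝ}
    (hf : MemLp f 2 μ) (hg : MemLp g 2 μ) (M : Matrix (Fin m) (Fin n) ℝ) :
    ∫ ω, f ω ⬝ᵥ M *ᵥ g ω ∂μ = ∑ i, ∑ j, M i j * ∫ ω, f ω i * g ω j ∂μ := by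
  simp only [quad_eq_sum]
  rw [integral_finset_sum _ fun i _ => integrable_finset_sum _ fun j _ =>
    (L2_mul_integrable (memℒp_component hf i) (memℒp_component hg j)).const_mul (M i j)]
  refine Finset.sum_congr rfl fun i _ => ?_
  rw [integral_finset_sum _ fun j _ =>
    (L2_mul_integrable (memℒp_component hf i) (memℒp_component hg j)).const_mul (M i j)]
  exact Finset.sum_congr rfl fun j _ => integral_const_mul _ _

lemma iIndepFun_congr_ae {ι : Type*} {β : Type*} [MeasurableSpace β]
    {f g : ι → Ω → β} (h : iIndepFun f μ)
    (hfg : ∀ i, f i =ᵐ[μ] g i) : iIndepFun g μ := by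
  rw [iIndepFun_iff_measure_inter_preimage_eq_mul] at h ⊢
  intro S sets hsets
  have hae : ∀ i, ∀ s : Set β, (f i ⁻¹' s : Set Ω) =ᵐ[μ] g i ⁻¹' s := by
    intro i s
    rw [Filter.eventuallyEq_set]
    filter_upwards [hfg i] with ω hω
    simp only [Set.mem_preimage, hω]
  have h1 : (⋂ i ∈ S, f i ⁻¹' sets i : Set Ω) =ᵐ[μ] ⋂ i ∈ S, g i ⁻¹' sets i := by
    have hball : ∀ᵐ ω ∂μ, ∀ i ∈ (S : Set ι), f i ω = g i ω := by
      rw [MeasureTheory.ae_ball_iff S.countable_toSet]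
      exact fun i _ => hfg i
    rw [Filter.eventuallyEq_set]
    filter_upwards [hball] with ω hω
    simp only [Set.mem_iInter, Set.mem_preimage]
    constructor
    · intro hmem i hi; rw [← hω i hi]; exact hmem i hi
    · intro hmem i hi; rw [hω i hi]; exact hmem i hi
  rw [← measure_congr h1, h S hsets]
  exact Finset.prod_congr rfl fun i _ => measure_congr (hae i (sets i))

/-- The closed-loop sequence driven by noise `e`. -/
def seqDyn {d : ℕ} {Ω : Type*} (Φ : Matrix (Fin d) (Fin d) ℝ) (y0 : Fin d → ℝ)
    (e : ℕ → Ω → Fin d → ℝ) : ℕ → Ω → Fin d → ℝ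
  | 0 => fun _ => y0
  | (t+1) => fun ω => Φ *ᵥ seqDyn Φ y0 e t ω + e t ω

lemma seqDyn_prefix {d : ℕ} {Ω : Type*} [MeasurableSpace Ω]
    (Φ : Matrix (Fin d) (Fin d) ℝ) (y0 : Fin d → ℝ) (e : ℕ → Ω → Fin d → ℝ)
    (t : ℕ) :
    ∃ G : (↥(Finset.range t) → Fin d → ℝ) → Fin d → ℝ,
      Measurable G ∧ ∀ ω, seqDyn Φ y0 e t ω = G (fun i => e i ω) := by
  induction t with
  | zero => exact ⟨fun _ => y0, measurable_const, fun ω => rfl⟩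
  | succ t ih =>
    obtain ⟨G, hG, hGe⟩ := ih
    have hr : Measurable (fun (v : ↥(Finset.range (t+1)) → Fin d → ℝ)
        (i : ↥(Finset.range t)) => v ⟨i.1,
          Finset.mem_range.2 (Nat.lt_succ_of_lt (Finset.mem_range.1 i.2))⟩) :=
      measurable_pi_lambda _ fun i => measurable_pi_apply _
    refine ⟨fun v => Φ *ᵥ G (fun i => v ⟨i.1,
        Finset.mem_range.2 (Nat.lt_succ_of_lt (Finset.mem_range.1 i.2))⟩)
        + v ⟨t, Finset.self_mem_range_succ t⟩,
      ((measurable_mulVec' Φ).comp (hG.comp hr)).add (measurable_pi_apply _), fun ω => ?_⟩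
    show Φ *ᵥ seqDyn Φ y0 e t ω + e t ω = _
    rw [hGe ω]

lemma seqDyn_measurable {d : ℕ} {Ω : Type*} [MeasurableSpace Ω]
    (Φ : Matrix (Fin d) (Fin d) ℝ) (y0 : Fin d → ℝ) (e : ℕ → Ω → Fin d → ℝ)
    (hmeas : ∀ i, Measurable (e i)) (t : ℕ) :
    Measurable (seqDyn Φ y0 e t) := by
  induction t with
  | zero => exact measurable_const
  | succ t ih => exact ((measurable_mulVec' Φ).comp ih).add (hmeas t)

lemma seqDyn_indep {d : ℕ} {Ω : Type*} [MeasurableSpace Ω] {μ : Measure Ω}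
    (Φ : Matrix (Fin d) (Fin d) ℝ) (y0 : Fin d → ℝ) (e : ℕ → Ω → Fin d → ℝ)
    (hmeas : ∀ i, Measurable (e i))
    (hindep : iIndepFun e μ) (t : ℕ) :
    IndepFun (seqDyn Φ y0 e t) (e t) μ := by
  obtain ⟨G, hG, hGe⟩ := seqDyn_prefix Φ y0 e t
  have hdisj : Disjoint (Finset.range t) ({t} : Finset ℕ) :=
    Finset.disjoint_singleton_right.mpr Finset.notMem_range_self
  have base := hindep.indepFun_finset (Finset.range t) {t} hdisj hmeas
  have key := base.comp hG
    (measurable_pi_apply (⟨t, Finset.mem_singleton_self t⟩ : ({t} : Finset ℕ)))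
  have h1 : seqDyn Φ y0 e t = G ∘ (fun a (i : ↥(Finset.range t)) => e i a) :=
    funext fun ω => hGe ω
  have h2 : e t = (fun v : ({t} : Finset ℕ) → Fin d → ℝ =>
      v ⟨t, Finset.mem_singleton_self t⟩) ∘ (fun a (i : ({t} : Finset ℕ)) => e i a) := rfl
  rw [h1, h2]
  exact key

end helpers

set_option maxHeartbeats 2000000 in
/-- Telescoped Lyapunov identity: for any symmetric `P`, the gap between the closed-loop
cost `C_y(K₁,K₂,ỹ)` and `C_y*(P;ỹ)` equals the discounted sum of the residual quadratic
form built from the Riccati blocks. -/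
theorem stmt_15 {d l : ℕ} {Ω : Type*} [MeasurableSpace Ω] (μ : Measure Ω)
    [IsProbabilityMeasure μ]
    (γ : ℝ) (hγ : γ ∈ Set.Ioo (0:ℝ) 1)
    (A Q P : Matrix (Fin d) (Fin d) ℝ) (hP : P.IsSymm) (hQ : Q.IsSymm)
    (B1 B2 : Matrix (Fin d) (Fin l) ℝ) (R1 R2 : Matrix (Fin l) (Fin l) ℝ)
    (hR1 : R1.IsSymm) (hR2 : R2.IsSymm)
    (K1 K2 : Matrix (Fin l) (Fin d) ℝ)
    (ytilde : Fin d → ℝ) (y : ℕ → Ω → Fin d → ℝ) (ε : ℕ → Ω → Fin d → ℝ)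
    (hy0 : ∀ ω, y 0 ω = ytilde)
    (hdyn : ∀ t ω, y (t + 1) ω =
      (A - B1 * K1 + B2 * K2).mulVec (y t ω) + ε (t + 1) ω)
    (hε2 : ∀ t, MemLp (ε (t + 1)) 2 μ)
    (hεmean : ∀ t, ∫ ω, ε (t + 1) ω ∂μ = 0)
    (hεindep : iIndepFun (fun t => ε (t + 1)) μ)
    (hεident : ∀ s t, IdentDistrib (ε (s + 1)) (ε (t + 1)) μ μ)
    (hy2 : ∀ t, MemLp (y t) 2 μ)
    (hL2 : Summable (fun t => γ ^ t * ∫ ω, ‖y t ω‖ ^ 2 ∂μ)) :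
    (∑' t : ℕ, γ ^ t * ∫ ω,
        (y t ω ⬝ᵥ Q.mulVec (y t ω)
          + K1.mulVec (y t ω) ⬝ᵥ R1.mulVec (K1.mulVec (y t ω))
          - K2.mulVec (y t ω) ⬝ᵥ R2.mulVec (K2.mulVec (y t ω))) ∂μ)
      - (ytilde ⬝ᵥ P.mulVec ytilde
          + γ / (1 - γ) * ∫ ω, ε 1 ω ⬝ᵥ P.mulVec (ε 1 ω) ∂μ)
    = ∑' t : ℕ, γ ^ t * ∫ ω,
        (Sum.elim (y t ω) (Sum.elim (-(K1.mulVec (y t ω))) (K2.mulVec (y t ω)))) ⬝ᵥ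
          (fromBlocks (γ • (Aᵀ * P * A) - P + Q)
            (fromCols (γ • (Aᵀ * P * B1)) (γ • (Aᵀ * P * B2)))
            (fromRows (γ • (Aᵀ * P * B1))ᵀ (γ • (Aᵀ * P * B2))ᵀ)
            (fromBlocks (γ • (B1ᵀ * P * B1) + R1) (γ • (B1ᵀ * P * B2))
              (γ • (B1ᵀ * P * B2))ᵀ (γ • (B2ᵀ * P * B2) - R2))).mulVec
          (Sum.elim (y t ω) (Sum.elim (-(K1.mulVec (y t ω))) (K2.mulVec (y t ω)))) ∂μ := by
  obtain ⟨hγ0, hγ1⟩ := hγ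
  have h1γ : (1:ℝ) - γ ≠ 0 := by linarith
  set Φ : Matrix (Fin d) (Fin d) ℝ := A - B1 * K1 + B2 * K2 with hΦdef
  -- measurable versions of the noise
  set ε' : ℕ → Ω → Fin d → ℝ := fun t => (hε2 t).1.mk (ε (t + 1)) with hε'def
  have hε'meas : ∀ t, Measurable (ε' t) := fun t => (hε2 t).1.stronglyMeasurable_mk.measurable
  have hε'ae : ∀ t, ε (t + 1) =ᵐ[μ] ε' t := fun t => (hε2 t).1.ae_eq_mk
  have hε'indep : iIndepFun ε' μ :=
    iIndepFun_congr_ae hεindep hε'ae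
  set y' : ℕ → Ω → Fin d → ℝ := seqDyn Φ ytilde ε' with hy'def
  have hy'ae : ∀ t, y t =ᵐ[μ] y' t := by
    intro t
    induction t with
    | zero =>
      refine Filter.Eventually.of_forall fun ω => ?_
      rw [hy0 ω]; rfl
    | succ t ih =>
      filter_upwards [ih, hε'ae t] with ω h1 h2
      show y (t+1) ω = Φ *ᵥ y' t ω + ε' t ω
      rw [hdyn t ω, h1, h2]
  -- basic quantities
  set a : ℕ → ℝ := fun t => ∫ ω, y t ω ⬝ᵥ P *ᵥ y t ω ∂μ with ha_def
  set c : ℕ → ℝ := fun t => ∫ ω,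
      (y t ω ⬝ᵥ Q *ᵥ y t ω + (K1 *ᵥ y t ω) ⬝ᵥ R1 *ᵥ (K1 *ᵥ y t ω)
        - (K2 *ᵥ y t ω) ⬝ᵥ R2 *ᵥ (K2 *ᵥ y t ω)) ∂μ with hc_def
  set σ : ℝ := ∫ ω, ε 1 ω ⬝ᵥ P *ᵥ ε 1 ω ∂μ with hσ_def
  -- σ is the same at every time
  have hσt : ∀ t, ∫ ω, ε (t + 1) ω ⬝ᵥ P *ᵥ ε (t + 1) ω ∂μ = σ := by
    intro t
    have hid := (hεident t 0).comp (continuous_quadform P).measurable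
    exact hid.integral_eq
  -- mean-zero components
  have hmean0 : ∀ t (j : Fin d), ∫ ω, ε (t + 1) ω j ∂μ = 0 := by
    intro t j
    have hint : Integrable (ε (t + 1)) μ := (hε2 t).integrable one_le_two
    have := (ContinuousLinearMap.proj (R := ℝ) (φ := fun _ : Fin d => ℝ) j).integral_comp_comm hint
    simp only [ContinuousLinearMap.proj_apply] at this
    rw [this, hεmean t]
    rfl
  -- cross terms vanish
  have hcross : ∀ t (i j : Fin d),
      ∫ ω, (Φ *ᵥ y t ω) i * ε (t + 1) ω j ∂μ = 0 := by
    intro t i j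
    have hcongr : (fun ω => (Φ *ᵥ y t ω) i * ε (t + 1) ω j)
        =ᵐ[μ] fun ω => (Φ *ᵥ y' t ω) i * ε' t ω j := by
      filter_upwards [hy'ae t, hε'ae t] with ω h1 h2
      rw [h1, h2]
    rw [integral_congr_ae hcongr]
    have indep0 : IndepFun (y' t) (ε' t) μ :=
      seqDyn_indep Φ ytilde ε' hε'meas hε'indep t
    have indep1 : IndepFun (fun ω => (Φ *ᵥ y' t ω) i) (fun ω => ε' t ω j) μ :=
      indep0.comp ((measurable_pi_apply i).comp (measurable_mulVec' Φ)) (measurable_pi_apply j)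
    have hmul : ∫ ω, (Φ *ᵥ y' t ω) i * ε' t ω j ∂μ
        = (∫ ω, (Φ *ᵥ y' t ω) i ∂μ) * ∫ ω, ε' t ω j ∂μ :=
      indep1.integral_mul_eq_mul_integral
        (((measurable_pi_apply i).comp ((measurable_mulVec' Φ).comp
          (seqDyn_measurable Φ ytilde ε' hε'meas t))).aestronglyMeasurable)
        (((measurable_pi_apply j).comp (hε'meas t)).aestronglyMeasurable)
    have hz : ∫ ω, ε' t ω j ∂μ = 0 := by
      rw [← hmean0 t j]
      refine integral_congr_ae ?_
      filter_upwards [hε'ae t] with ω h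
      rw [h]
    rw [hmul, hz, mul_zero]
  have hcross' : ∀ t (i j : Fin d),
      ∫ ω, ε (t + 1) ω i * (Φ *ᵥ y t ω) j ∂μ = 0 := by
    intro t i j
    have : (fun ω => ε (t + 1) ω i * (Φ *ᵥ y t ω) j)
        = fun ω => (Φ *ᵥ y t ω) j * ε (t + 1) ω i := funext fun ω => mul_comm _ _
    rw [this, hcross t j i]
  -- MemLp facts
  have hw2 : ∀ t, MemLp (fun ω => Φ *ᵥ y t ω) 2 μ := fun t => memℒp_mulVec (hy2 t) Φ
  -- the key one-step identity
  have hstep : ∀ t, ∫ ω, (Φ *ᵥ y t ω) ⬝ᵥ P *ᵥ (Φ *ᵥ y t ω) ∂μ = a (t + 1) - σ := by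
    intro t
    have hsplit : a (t + 1)
        = ∫ ω, (Φ *ᵥ y t ω) ⬝ᵥ P *ᵥ (Φ *ᵥ y t ω) ∂μ
          + (∫ ω, (Φ *ᵥ y t ω) ⬝ᵥ P *ᵥ ε (t + 1) ω ∂μ
            + (∫ ω, ε (t + 1) ω ⬝ᵥ P *ᵥ (Φ *ᵥ y t ω) ∂μ
              + ∫ ω, ε (t + 1) ω ⬝ᵥ P *ᵥ ε (t + 1) ω ∂μ)) := by
      have hexp : ∀ ω, y (t+1) ω ⬝ᵥ P *ᵥ y (t+1) ω
          = (Φ *ᵥ y t ω) ⬝ᵥ P *ᵥ (Φ *ᵥ y t ω)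
            + ((Φ *ᵥ y t ω) ⬝ᵥ P *ᵥ ε (t + 1) ω
              + (ε (t + 1) ω ⬝ᵥ P *ᵥ (Φ *ᵥ y t ω)
                + ε (t + 1) ω ⬝ᵥ P *ᵥ ε (t + 1) ω)) := by
        intro ω
        rw [hdyn t ω]
        simp only [mulVec_add, dotProduct_add, add_dotProduct]
        ring
      have I1 := integrable_quadform (hw2 t) (hw2 t) P
      have I2 := integrable_quadform (hw2 t) (hε2 t) P
      have I3 := integrable_quadform (hε2 t) (hw2 t) P
      have I4 := integrable_quadform (hε2 t) (hε2 t) P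
      have I34 : Integrable (fun ω => ε (t + 1) ω ⬝ᵥ P *ᵥ (Φ *ᵥ y t ω)
          + ε (t + 1) ω ⬝ᵥ P *ᵥ ε (t + 1) ω) μ := I3.add I4
      have I234 : Integrable (fun ω => (Φ *ᵥ y t ω) ⬝ᵥ P *ᵥ ε (t + 1) ω
          + (ε (t + 1) ω ⬝ᵥ P *ᵥ (Φ *ᵥ y t ω)
            + ε (t + 1) ω ⬝ᵥ P *ᵥ ε (t + 1) ω)) μ := I2.add I34
      rw [ha_def]
      simp only [hexp]
      rw [integral_add I1 I234, integral_add I2 I34, integral_add I3 I4]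
    have hz1 : ∫ ω, (Φ *ᵥ y t ω) ⬝ᵥ P *ᵥ ε (t + 1) ω ∂μ = 0 := by
      rw [integral_quadform (hw2 t) (hε2 t) P]
      simp only [hcross t, mul_zero]
      simp
    have hz2 : ∫ ω, ε (t + 1) ω ⬝ᵥ P *ᵥ (Φ *ᵥ y t ω) ∂μ = 0 := by
      rw [integral_quadform (hε2 t) (hw2 t) P]
      simp only [hcross' t, mul_zero]
      simp
    rw [hz1, hz2, hσt t] at hsplit
    linarith
  -- one-step integral identity for the big quadratic form
  have hbigint : ∀ t, (∫ ω,
        (Sum.elim (y t ω) (Sum.elim (-(K1.mulVec (y t ω))) (K2.mulVec (y t ω)))) ⬝ᵥ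
          (fromBlocks (γ • (Aᵀ * P * A) - P + Q)
            (fromCols (γ • (Aᵀ * P * B1)) (γ • (Aᵀ * P * B2)))
            (fromRows (γ • (Aᵀ * P * B1))ᵀ (γ • (Aᵀ * P * B2))ᵀ)
            (fromBlocks (γ • (B1ᵀ * P * B1) + R1) (γ • (B1ᵀ * P * B2))
              (γ • (B1ᵀ * P * B2))ᵀ (γ • (B2ᵀ * P * B2) - R2))).mulVec
          (Sum.elim (y t ω) (Sum.elim (-(K1.mulVec (y t ω))) (K2.mulVec (y t ω)))) ∂μ)
      = γ * (a (t + 1) - σ) - a t + c t := by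
    intro t
    have hptw : ∀ ω, (Sum.elim (y t ω) (Sum.elim (-(K1.mulVec (y t ω))) (K2.mulVec (y t ω)))) ⬝ᵥ
          (fromBlocks (γ • (Aᵀ * P * A) - P + Q)
            (fromCols (γ • (Aᵀ * P * B1)) (γ • (Aᵀ * P * B2)))
            (fromRows (γ • (Aᵀ * P * B1))ᵀ (γ • (Aᵀ * P * B2))ᵀ)
            (fromBlocks (γ • (B1ᵀ * P * B1) + R1) (γ • (B1ᵀ * P * B2))
              (γ • (B1ᵀ * P * B2))ᵀ (γ • (B2ᵀ * P * B2) - R2))).mulVec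
          (Sum.elim (y t ω) (Sum.elim (-(K1.mulVec (y t ω))) (K2.mulVec (y t ω))))
        = γ * ((Φ *ᵥ y t ω) ⬝ᵥ P *ᵥ (Φ *ᵥ y t ω)) - y t ω ⬝ᵥ P *ᵥ y t ω
          + (y t ω ⬝ᵥ Q *ᵥ y t ω + (K1 *ᵥ y t ω) ⬝ᵥ R1 *ᵥ (K1 *ᵥ y t ω)
            - (K2 *ᵥ y t ω) ⬝ᵥ R2 *ᵥ (K2 *ᵥ y t ω)) := by
      intro ω
      rw [quad_expand γ A Q P hP B1 B2 R1 R2 (y t ω) (-(K1 *ᵥ y t ω)) (K2 *ᵥ y t ω)]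
      have hv : A *ᵥ y t ω + B1 *ᵥ (-(K1 *ᵥ y t ω)) + B2 *ᵥ (K2 *ᵥ y t ω) = Φ *ᵥ y t ω := by
        rw [hΦdef]
        simp only [Matrix.add_mulVec, Matrix.sub_mulVec, Matrix.mulVec_neg,
          ← Matrix.mulVec_mulVec]
        abel
      rw [hv]
      simp only [neg_dotProduct, Matrix.mulVec_neg, dotProduct_neg, neg_neg]
    simp only [hptw]
    have J1 := integrable_quadform (hw2 t) (hw2 t) P
    have J2 := integrable_quadform (hy2 t) (hy2 t) P
    have JQ := integrable_quadform (hy2 t) (hy2 t) Q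
    have JR1 := integrable_quadform (memℒp_mulVec (hy2 t) K1) (memℒp_mulVec (hy2 t) K1) R1
    have JR2 := integrable_quadform (memℒp_mulVec (hy2 t) K2) (memℒp_mulVec (hy2 t) K2) R2
    have J1' : Integrable (fun ω => γ * ((Φ *ᵥ y t ω) ⬝ᵥ P *ᵥ (Φ *ᵥ y t ω))) μ := J1.const_mul γ
    have JA : Integrable (fun ω => γ * ((Φ *ᵥ y t ω) ⬝ᵥ P *ᵥ (Φ *ᵥ y t ω))
        - y t ω ⬝ᵥ P *ᵥ y t ω) μ := J1'.sub J2
    have JQR : Integrable (fun ω => y t ω ⬝ᵥ Q *ᵥ y t ω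
        + (K1 *ᵥ y t ω) ⬝ᵥ R1 *ᵥ (K1 *ᵥ y t ω)) μ := JQ.add JR1
    have JB : Integrable (fun ω => y t ω ⬝ᵥ Q *ᵥ y t ω
        + (K1 *ᵥ y t ω) ⬝ᵥ R1 *ᵥ (K1 *ᵥ y t ω)
        - (K2 *ᵥ y t ω) ⬝ᵥ R2 *ᵥ (K2 *ᵥ y t ω)) μ := JQR.sub JR2
    rw [integral_add JA JB, integral_sub J1' J2, integral_const_mul, hstep t]
  -- bounds and summability
  set nrm : ℕ → ℝ := fun t => ∫ ω, ‖y t ω‖ ^ 2 ∂μ with hnrm_def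
  have hnrm_int : ∀ t, Integrable (fun ω => ‖y t ω‖ ^ 2) μ := fun t => (hy2 t).norm.integrable_sq
  have hnrm_nonneg : ∀ t, 0 ≤ nrm t := fun t => integral_nonneg fun ω => by positivity
  set Cp : ℝ := ∑ i, ∑ j, |P i j| with hCp_def
  have hCp0 : 0 ≤ Cp := Finset.sum_nonneg fun i _ => Finset.sum_nonneg fun j _ => abs_nonneg _
  have ha_bound : ∀ t, |a t| ≤ Cp * nrm t := by
    intro t
    have h1 : |a t| ≤ ∫ ω, |y t ω ⬝ᵥ P *ᵥ y t ω| ∂μ := by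
      have := norm_integral_le_integral_norm (fun ω => y t ω ⬝ᵥ P *ᵥ y t ω) (μ := μ)
      simp only [Real.norm_eq_abs] at this
      exact this
    refine h1.trans ?_
    have h2 : ∫ ω, |y t ω ⬝ᵥ P *ᵥ y t ω| ∂μ ≤ ∫ ω, Cp * ‖y t ω‖ ^ 2 ∂μ := by
      refine integral_mono (integrable_quadform (hy2 t) (hy2 t) P).abs
        ((hnrm_int t).const_mul Cp) fun ω => ?_
      calc |y t ω ⬝ᵥ P *ᵥ y t ω| ≤ Cp * (‖y t ω‖ * ‖y t ω‖) := quad_bound P _ _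
        _ = Cp * ‖y t ω‖ ^ 2 := by ring
    refine h2.trans_eq ?_
    rw [integral_const_mul]
  have hsum_a : Summable (fun t => γ ^ t * a t) := by
    refine Summable.of_norm_bounded (g := fun t => Cp * (γ ^ t * nrm t)) (hL2.mul_left Cp) fun t => ?_
    have hγt : (0:ℝ) ≤ γ ^ t := by positivity
    rw [Real.norm_eq_abs, abs_mul, abs_of_nonneg hγt]
    calc γ ^ t * |a t| ≤ γ ^ t * (Cp * nrm t) :=
          mul_le_mul_of_nonneg_left (ha_bound t) hγt
      _ = Cp * (γ ^ t * nrm t) := by ring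
  set CQ : ℝ := ∑ i, ∑ j, |Q i j| with hCQ_def
  set CR1 : ℝ := ∑ i, ∑ j, |R1 i j| with hCR1_def
  set CR2 : ℝ := ∑ i, ∑ j, |R2 i j| with hCR2_def
  set CK1 : ℝ := ∑ i, ∑ j, |K1 i j| with hCK1_def
  set CK2 : ℝ := ∑ i, ∑ j, |K2 i j| with hCK2_def
  have hCQ0 : 0 ≤ CQ := Finset.sum_nonneg fun i _ => Finset.sum_nonneg fun j _ => abs_nonneg _
  have hCR10 : 0 ≤ CR1 := Finset.sum_nonneg fun i _ => Finset.sum_nonneg fun j _ => abs_nonneg _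
  have hCR20 : 0 ≤ CR2 := Finset.sum_nonneg fun i _ => Finset.sum_nonneg fun j _ => abs_nonneg _
  have hCK10 : 0 ≤ CK1 := Finset.sum_nonneg fun i _ => Finset.sum_nonneg fun j _ => abs_nonneg _
  have hCK20 : 0 ≤ CK2 := Finset.sum_nonneg fun i _ => Finset.sum_nonneg fun j _ => abs_nonneg _
  set Cc : ℝ := CQ + CR1 * CK1 ^ 2 + CR2 * CK2 ^ 2 with hCc_def
  have hc_bound : ∀ t, |c t| ≤ Cc * nrm t := by
    intro t
    have hcint : Integrable (fun ω => y t ω ⬝ᵥ Q *ᵥ y t ω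
        + (K1 *ᵥ y t ω) ⬝ᵥ R1 *ᵥ (K1 *ᵥ y t ω)
        - (K2 *ᵥ y t ω) ⬝ᵥ R2 *ᵥ (K2 *ᵥ y t ω)) μ :=
      ((integrable_quadform (hy2 t) (hy2 t) Q).add
        (integrable_quadform (memℒp_mulVec (hy2 t) K1) (memℒp_mulVec (hy2 t) K1) R1)).sub
        (integrable_quadform (memℒp_mulVec (hy2 t) K2) (memℒp_mulVec (hy2 t) K2) R2)
    have h1 : |c t| ≤ ∫ ω, |y t ω ⬝ᵥ Q *ᵥ y t ω
        + (K1 *ᵥ y t ω) ⬝ᵥ R1 *ᵥ (K1 *ᵥ y t ω)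
        - (K2 *ᵥ y t ω) ⬝ᵥ R2 *ᵥ (K2 *ᵥ y t ω)| ∂μ := by
      have := norm_integral_le_integral_norm (fun ω => y t ω ⬝ᵥ Q *ᵥ y t ω
          + (K1 *ᵥ y t ω) ⬝ᵥ R1 *ᵥ (K1 *ᵥ y t ω)
          - (K2 *ᵥ y t ω) ⬝ᵥ R2 *ᵥ (K2 *ᵥ y t ω)) (μ := μ)
      simp only [Real.norm_eq_abs] at this
      exact this
    refine h1.trans ?_
    have h2 : ∫ ω, |y t ω ⬝ᵥ Q *ᵥ y t ω
        + (K1 *ᵥ y t ω) ⬝ᵥ R1 *ᵥ (K1 *ᵥ y t ω)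
        - (K2 *ᵥ y t ω) ⬝ᵥ R2 *ᵥ (K2 *ᵥ y t ω)| ∂μ ≤ ∫ ω, Cc * ‖y t ω‖ ^ 2 ∂μ := by
      refine integral_mono hcint.abs ((hnrm_int t).const_mul Cc) fun ω => ?_
      have b1 : |y t ω ⬝ᵥ Q *ᵥ y t ω| ≤ CQ * (‖y t ω‖ * ‖y t ω‖) := quad_bound Q _ _
      have b2 : |(K1 *ᵥ y t ω) ⬝ᵥ R1 *ᵥ (K1 *ᵥ y t ω)|
          ≤ CR1 * (‖K1 *ᵥ y t ω‖ * ‖K1 *ᵥ y t ω‖) := quad_bound R1 _ _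
      have b3 : |(K2 *ᵥ y t ω) ⬝ᵥ R2 *ᵥ (K2 *ᵥ y t ω)|
          ≤ CR2 * (‖K2 *ᵥ y t ω‖ * ‖K2 *ᵥ y t ω‖) := quad_bound R2 _ _
      have n1 : ‖K1 *ᵥ y t ω‖ ≤ CK1 * ‖y t ω‖ := mulVec_norm_bound K1 _
      have n2 : ‖K2 *ᵥ y t ω‖ ≤ CK2 * ‖y t ω‖ := mulVec_norm_bound K2 _
      have nn1 : (0:ℝ) ≤ ‖K1 *ᵥ y t ω‖ := norm_nonneg _
      have nn2 : (0:ℝ) ≤ ‖K2 *ᵥ y t ω‖ := norm_nonneg _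
      have nny : (0:ℝ) ≤ ‖y t ω‖ := norm_nonneg _
      have sq1 : ‖K1 *ᵥ y t ω‖ * ‖K1 *ᵥ y t ω‖ ≤ CK1 ^ 2 * ‖y t ω‖ ^ 2 := by nlinarith
      have sq2 : ‖K2 *ᵥ y t ω‖ * ‖K2 *ᵥ y t ω‖ ≤ CK2 ^ 2 * ‖y t ω‖ ^ 2 := by nlinarith
      have habs : ∀ x1 x2 x3 : ℝ, |x1 + x2 - x3| ≤ |x1| + |x2| + |x3| := by
        intro x1 x2 x3
        calc |x1 + x2 - x3| ≤ |x1 + x2| + |x3| := abs_sub (x1 + x2) x3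
          _ ≤ |x1| + |x2| + |x3| := by
              have := abs_add_le x1 x2
              linarith
      have hfin := habs (y t ω ⬝ᵥ Q *ᵥ y t ω) ((K1 *ᵥ y t ω) ⬝ᵥ R1 *ᵥ (K1 *ᵥ y t ω))
        ((K2 *ᵥ y t ω) ⬝ᵥ R2 *ᵥ (K2 *ᵥ y t ω))
      rw [hCc_def]
      nlinarith
    refine h2.trans_eq ?_
    rw [integral_const_mul]
  have hsum_c : Summable (fun t => γ ^ t * c t) := by
    refine Summable.of_norm_bounded (g := fun t => Cc * (γ ^ t * nrm t)) (hL2.mul_left Cc) fun t => ?_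
    have hγt : (0:ℝ) ≤ γ ^ t := by positivity
    rw [Real.norm_eq_abs, abs_mul, abs_of_nonneg hγt]
    calc γ ^ t * |c t| ≤ γ ^ t * (Cc * nrm t) :=
          mul_le_mul_of_nonneg_left (hc_bound t) hγt
      _ = Cc * (γ ^ t * nrm t) := by ring
  -- assemble the telescoping sum
  have hsum_a1 : Summable (fun t => γ ^ (t + 1) * a (t + 1)) :=
    (summable_nat_add_iff 1).2 hsum_a
  have hsum_geo : Summable (fun t : ℕ => γ ^ t) :=
    summable_geometric_of_lt_one (le_of_lt hγ0) hγ1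
  have hsum_s : Summable (fun t : ℕ => γ ^ (t + 1) * σ) := by
    have : (fun t : ℕ => γ ^ (t + 1) * σ) = fun t : ℕ => (γ * σ) * γ ^ t := by
      funext t; ring
    rw [this]
    exact hsum_geo.mul_left _
  have hkey : ∀ t : ℕ, γ ^ t * (γ * (a (t + 1) - σ) - a t + c t)
      = (γ ^ (t + 1) * a (t + 1) - γ ^ t * a t) - γ ^ (t + 1) * σ + γ ^ t * c t := by
    intro t; ring
  have htel : ∑' t : ℕ, (γ ^ (t + 1) * a (t + 1) - γ ^ t * a t) = - (a 0) := by
    rw [Summable.tsum_sub hsum_a1 hsum_a]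
    have h0 : ∑' t : ℕ, γ ^ (t + 1) * a (t + 1)
        = (∑' t : ℕ, γ ^ t * a t) - γ ^ 0 * a 0 := by
      rw [Summable.tsum_eq_zero_add hsum_a]
      ring
    rw [h0]
    simp
  have hgeo : ∑' t : ℕ, γ ^ (t + 1) * σ = γ * σ * (1 - γ)⁻¹ := by
    have h1 : (fun t : ℕ => γ ^ (t + 1) * σ) = fun t : ℕ => (γ * σ) * γ ^ t := by
      funext t; ring
    rw [h1, tsum_mul_left, tsum_geometric_of_lt_one (le_of_lt hγ0) hγ1]
  have ha0 : a 0 = ytilde ⬝ᵥ P *ᵥ ytilde := by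
    rw [ha_def]
    simp only [hy0]
    rw [integral_const]
    simp
  calc (∑' t : ℕ, γ ^ t * ∫ ω,
        (y t ω ⬝ᵥ Q.mulVec (y t ω)
          + K1.mulVec (y t ω) ⬝ᵥ R1.mulVec (K1.mulVec (y t ω))
          - K2.mulVec (y t ω) ⬝ᵥ R2.mulVec (K2.mulVec (y t ω))) ∂μ)
      - (ytilde ⬝ᵥ P.mulVec ytilde
          + γ / (1 - γ) * ∫ ω, ε 1 ω ⬝ᵥ P.mulVec (ε 1 ω) ∂μ)
      = (∑' t : ℕ, γ ^ t * c t) - (a 0 + γ * σ * (1 - γ)⁻¹) := by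
        rw [ha0]
        congr 1
        rw [hσ_def]
        rw [div_eq_mul_inv]
        ring
    _ = ∑' t : ℕ, ((γ ^ (t + 1) * a (t + 1) - γ ^ t * a t) - γ ^ (t + 1) * σ + γ ^ t * c t) := by
        rw [Summable.tsum_add ((hsum_a1.sub hsum_a).sub hsum_s) hsum_c,
          Summable.tsum_sub (hsum_a1.sub hsum_a) hsum_s, htel, hgeo]
        ring
    _ = ∑' t : ℕ, γ ^ t * (γ * (a (t + 1) - σ) - a t + c t) := by
        exact (tsum_congr hkey).symm
    _ = _ := by
        refine tsum_congr fun t => ?_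
        rw [hbigint t]
end
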